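/- Let (M,Q,l) be subextremal Reissner–Nordström–AdS parameters with 0 < |Q| < M, let 0 < r_− < r_+ denote the two positive roots of Δ, and let α < 9/4. Then there exists ℓ₀ ∈ ℕ (depending on M, Q, l, α) such that for every integer ℓ ≥ ℓ₀ there is a point r_{ℓ,max} > r_+ which is a local maximum of the potential V_ℓ on (r_+, ∞) and which satisfies V_ℓ'(r) ≥ 0 for all r ∈ [r_+, r_{ℓ,max}]. Moreover, these points can be chosen so that r_{ℓ,max} → (3/2)M + √((9/4)M² − 2Q²) as ℓ → ∞. -/

import Mathlib

open Real Filter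

/-- The metric coefficient `h(r) = Δ(r)/r² = 1 − 2M/r + Q²/r² + r²/l²`. -/
noncomputable def hRNAdS (M Q l : ℝ) : ℝ → ℝ :=
  fun r => 1 - 2 * M / r + Q ^ 2 / r ^ 2 + r ^ 2 / l ^ 2

/-- The potential `V_ℓ(r) = h(r)·( h'(r)/r + ℓ(ℓ+1)/r² − α/l² )` of the radial o.d.e. -/
noncomputable def VRNAdS (M Q l α : ℝ) (ℓ : ℕ) : ℝ → ℝ :=
  fun r => hRNAdS M Q l r *
    (deriv (hRNAdS M Q l) r / r + ((ℓ : ℝ) * ((ℓ : ℝ) + 1)) / r ^ 2 - α / l ^ 2)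

noncomputable def H1 (M Q l : ℝ) : ℝ → ℝ := fun r => 2*M/r^2 - 2*Q^2/r^3 + 2*r/l^2
noncomputable def H2 (M Q l : ℝ) : ℝ → ℝ := fun r => -(4*M)/r^3 + 6*Q^2/r^4 + 2/l^2
noncomputable def H3 (M Q : ℝ) : ℝ → ℝ := fun r => 12*M/r^4 - 24*Q^2/r^5

lemma hasDerivAt_hRNAdS (M Q l : ℝ) (hl : l ≠ 0) {r : ℝ} (hr : r ≠ 0) :
    HasDerivAt (hRNAdS M Q l) (H1 M Q l r) r := by
  have hr2 : r^2 ≠ 0 := pow_ne_zero _ hr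
  have d1 : HasDerivAt (fun r : ℝ => 2*M/r) ((0*r - 2*M*1)/r^2) r :=
    (hasDerivAt_const r (2*M)).div (hasDerivAt_id r) hr
  have d2 : HasDerivAt (fun r : ℝ => Q^2/r^2) ((0*r^2 - Q^2*(2*r^1))/(r^2)^2) r :=
    (hasDerivAt_const r (Q^2)).div (hasDerivAt_pow 2 r) hr2
  have d3 : HasDerivAt (fun r : ℝ => r^2/l^2) ((2*r^1)/l^2) r :=
    (hasDerivAt_pow 2 r).div_const _
  have := (((hasDerivAt_const r (1:ℝ)).sub d1).add d2).add d3
  convert this using 1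
  · rfl
  · rfl
  · rfl
  unfold H1
  field_simp
  ring

lemma hasDerivAt_H1 (M Q l : ℝ) (hl : l ≠ 0) {r : ℝ} (hr : r ≠ 0) :
    HasDerivAt (H1 M Q l) (H2 M Q l r) r := by
  have hr2 : r^2 ≠ 0 := pow_ne_zero _ hr
  have hr3 : r^3 ≠ 0 := pow_ne_zero _ hr
  have d1 : HasDerivAt (fun r : ℝ => 2*M/r^2) ((0*r^2 - 2*M*(2*r^1))/(r^2)^2) r :=
    (hasDerivAt_const r (2*M)).div (hasDerivAt_pow 2 r) hr2
  have d2 : HasDerivAt (fun r : ℝ => 2*Q^2/r^3) ((0*r^3 - 2*Q^2*(3*r^2))/(r^3)^2) r :=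
    (hasDerivAt_const r (2*Q^2)).div (hasDerivAt_pow 3 r) hr3
  have d3 : HasDerivAt (fun r : ℝ => 2*r/l^2) ((2*1)/l^2) r :=
    ((hasDerivAt_id r).const_mul 2).div_const _
  have := ((d1.sub d2).add d3)
  convert this using 1
  · rfl
  · rfl
  · rfl
  unfold H2
  field_simp
  ring

lemma hasDerivAt_H2 (M Q l : ℝ) {r : ℝ} (hr : r ≠ 0) :
    HasDerivAt (H2 M Q l) (H3 M Q r) r := by
  have hr3 : r^3 ≠ 0 := pow_ne_zero _ hr
  have hr4 : r^4 ≠ 0 := pow_ne_zero _ hr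
  have d1 : HasDerivAt (fun r : ℝ => -(4*M)/r^3) ((0*r^3 - (-(4*M))*(3*r^2))/(r^3)^2) r :=
    (hasDerivAt_const r (-(4*M))).div (hasDerivAt_pow 3 r) hr3
  have d2 : HasDerivAt (fun r : ℝ => 6*Q^2/r^4) ((0*r^4 - 6*Q^2*(4*r^3))/(r^4)^2) r :=
    (hasDerivAt_const r (6*Q^2)).div (hasDerivAt_pow 4 r) hr4
  have := ((d1.add d2).add (hasDerivAt_const r (2/l^2)))
  convert this using 1
  · rfl
  · rfl
  · rfl
  unfold H3
  field_simp
  ring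

noncomputable def Vexp (M Q l α c : ℝ) : ℝ → ℝ :=
  fun r => hRNAdS M Q l r * (H1 M Q l r / r + c / r^2 - α / l^2)

noncomputable def Vd (M Q l α c : ℝ) : ℝ → ℝ :=
  fun r => H1 M Q l r * (H1 M Q l r / r + c / r^2 - α / l^2)
    + hRNAdS M Q l r * (H2 M Q l r / r - H1 M Q l r / r^2 - 2*c / r^3)

noncomputable def Vdd (M Q l α c : ℝ) : ℝ → ℝ :=
  fun r => H2 M Q l r * (H1 M Q l r / r + c / r^2 - α / l^2)
    + 2 * H1 M Q l r * (H2 M Q l r / r - H1 M Q l r / r^2 - 2*c / r^3)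
    + hRNAdS M Q l r * (H3 M Q r / r - 2 * H2 M Q l r / r^2 + 2 * H1 M Q l r / r^3 + 6*c/r^4)

lemma hasDerivAt_inner (M Q l α c : ℝ) (hl : l ≠ 0) {r : ℝ} (hr : r ≠ 0) :
    HasDerivAt (fun r => H1 M Q l r / r + c / r^2 - α / l^2)
      (H2 M Q l r / r - H1 M Q l r / r^2 - 2*c / r^3) r := by
  have hr2 : r^2 ≠ 0 := pow_ne_zero _ hr
  have d1 : HasDerivAt (fun r => H1 M Q l r / r) ((H2 M Q l r * r - H1 M Q l r * 1) / r^2) r :=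
    (hasDerivAt_H1 M Q l hl hr).div (hasDerivAt_id r) hr
  have d2 : HasDerivAt (fun r : ℝ => c / r^2) ((0*r^2 - c*(2*r^1))/(r^2)^2) r :=
    (hasDerivAt_const r c).div (hasDerivAt_pow 2 r) hr2
  have := (d1.add d2).sub (hasDerivAt_const r (α/l^2))
  convert this using 1
  · rfl
  · rfl
  · rfl
  field_simp
  ring

lemma hasDerivAt_W (M Q l c : ℝ) (hl : l ≠ 0) {r : ℝ} (hr : r ≠ 0) :
    HasDerivAt (fun r => H2 M Q l r / r - H1 M Q l r / r^2 - 2*c / r^3)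
      (H3 M Q r / r - 2 * H2 M Q l r / r^2 + 2 * H1 M Q l r / r^3 + 6*c/r^4) r := by
  have hr2 : r^2 ≠ 0 := pow_ne_zero _ hr
  have hr3 : r^3 ≠ 0 := pow_ne_zero _ hr
  have d1 : HasDerivAt (fun r => H2 M Q l r / r) ((H3 M Q r * r - H2 M Q l r * 1) / r^2) r :=
    (hasDerivAt_H2 M Q l hr).div (hasDerivAt_id r) hr
  have d2 : HasDerivAt (fun r => H1 M Q l r / r^2)
      ((H2 M Q l r * r^2 - H1 M Q l r * (2*r^1)) / (r^2)^2) r :=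
    (hasDerivAt_H1 M Q l hl hr).div (hasDerivAt_pow 2 r) hr2
  have d3 : HasDerivAt (fun r : ℝ => 2*c / r^3) ((0*r^3 - 2*c*(3*r^2))/(r^3)^2) r :=
    (hasDerivAt_const r (2*c)).div (hasDerivAt_pow 3 r) hr3
  have := (d1.sub d2).sub d3
  convert this using 1
  · rfl
  · rfl
  · rfl
  unfold H1 H2 H3 at *
  field_simp
  ring

lemma hasDerivAt_Vexp (M Q l α c : ℝ) (hl : l ≠ 0) {r : ℝ} (hr : r ≠ 0) :
    HasDerivAt (Vexp M Q l α c) (Vd M Q l α c r) r :=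
  (hasDerivAt_hRNAdS M Q l hl hr).mul (hasDerivAt_inner M Q l α c hl hr)

lemma hasDerivAt_Vd (M Q l α c : ℝ) (hl : l ≠ 0) {r : ℝ} (hr : r ≠ 0) :
    HasDerivAt (Vd M Q l α c) (Vdd M Q l α c r) r := by
  have dA := (hasDerivAt_H1 M Q l hl hr).mul (hasDerivAt_inner M Q l α c hl hr)
  have dB := (hasDerivAt_hRNAdS M Q l hl hr).mul (hasDerivAt_W M Q l c hl hr)
  have := dA.add dB
  convert this using 1
  · rfl
  · rfl
  · rfl
  unfold Vdd
  ring

lemma VRNAdS_eq (M Q l α : ℝ) (ℓ : ℕ) (hl : l ≠ 0) {r : ℝ} (hr : r ≠ 0) :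
    VRNAdS M Q l α ℓ r = Vexp M Q l α ((ℓ : ℝ) * ((ℓ : ℝ) + 1)) r := by
  unfold VRNAdS Vexp
  rw [(hasDerivAt_hRNAdS M Q l hl hr).deriv]

lemma VRNAdS_eventuallyEq (M Q l α : ℝ) (ℓ : ℕ) (hl : l ≠ 0) {r : ℝ} (hr : r ≠ 0) :
    VRNAdS M Q l α ℓ =ᶠ[nhds r] Vexp M Q l α ((ℓ : ℝ) * ((ℓ : ℝ) + 1)) := by
  filter_upwards [IsOpen.mem_nhds isOpen_compl_singleton hr] with y hy
  exact VRNAdS_eq M Q l α ℓ hl hy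

lemma hasDerivAt_VRNAdS (M Q l α : ℝ) (ℓ : ℕ) (hl : l ≠ 0) {r : ℝ} (hr : r ≠ 0) :
    HasDerivAt (VRNAdS M Q l α ℓ) (Vd M Q l α ((ℓ : ℝ) * ((ℓ : ℝ) + 1)) r) r :=
  (hasDerivAt_Vexp M Q l α _ hl hr).congr_of_eventuallyEq
    (VRNAdS_eventuallyEq M Q l α ℓ hl hr)

lemma deriv_VRNAdS (M Q l α : ℝ) (ℓ : ℕ) (hl : l ≠ 0) {r : ℝ} (hr : r ≠ 0) :
    deriv (VRNAdS M Q l α ℓ) r = Vd M Q l α ((ℓ : ℝ) * ((ℓ : ℝ) + 1)) r :=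
  (hasDerivAt_VRNAdS M Q l α ℓ hl hr).deriv

lemma Vd_split (M Q l α c : ℝ) (hl : l ≠ 0) {r : ℝ} (hr : r ≠ 0) :
    Vd M Q l α c r = Vd M Q l α 0 r + c * ((-2*r^2 + 6*M*r - 4*Q^2) / r^5) := by
  unfold Vd hRNAdS H1 H2
  field_simp
  ring

lemma Vdd_split (M Q l α c : ℝ) (hl : l ≠ 0) {r : ℝ} (hr : r ≠ 0) :
    Vdd M Q l α c r = Vdd M Q l α 0 r + c * ((6*r^2 - 24*M*r + 20*Q^2) / r^6) := by
  unfold Vdd hRNAdS H1 H2 H3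
  field_simp
  ring

lemma continuousAt_Vdd (M Q l α c : ℝ) (hl : l ≠ 0) {r : ℝ} (hr : r ≠ 0) :
    ContinuousAt (Vdd M Q l α c) r := by
  unfold Vdd hRNAdS H1 H2 H3
  fun_prop (disch := first | exact hr | exact pow_ne_zero _ hr | exact pow_ne_zero _ hl)

lemma auxP1rp (M Q l rm rp : ℝ) (hl : 0 < l) (hrm : 0 < rm) (hrmrp : rm < rp)
    (hΔp' : rp^2*l^2 - 2*M*rp*l^2 + rp^4 + Q^2*l^2 = 0)
    (hK : Q^2*l^2 = rm*rp*(l^2+rm^2+rm*rp+rp^2)) :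
    0 < -2*rp^2 + 6*M*rp - 4*Q^2 := by
  have hrp : 0 < rp := hrm.trans hrmrp
  have e : (-2*rp^2+6*M*rp-4*Q^2)*l^2
      = rp*l^2*(rp-rm) + rp*(rp-rm)*(3*rp^2+2*rp*rm+rm^2) := by
    linear_combination (-3)*hΔp' - hK
  have h1 : 0 < rp*l^2*(rp-rm) :=
    mul_pos (mul_pos hrp (by positivity)) (by linarith)
  have h2 : 0 < rp*(rp-rm)*(3*rp^2+2*rp*rm+rm^2) :=
    mul_pos (mul_pos hrp (by linarith)) (by positivity)
  have hsum : 0 < (-2*rp^2+6*M*rp-4*Q^2)*l^2 := by rw [e]; linarith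
  nlinarith [hsum, sq_nonneg l]

lemma auxFac (M Q s r : ℝ) (hs2 : s^2 = 9*M^2 - 8*Q^2) :
    -2*r^2 + 6*M*r - 4*Q^2 = 2*(r - (3*M-s)/2)*((3*M+s)/2 - r) := by
  linear_combination (-(1:ℝ)/2) * hs2

lemma auxBetween (M Q s x : ℝ) (hs2 : s^2 = 9*M^2 - 8*Q^2) (hs0 : 0 < s)
    (hx : 0 < -2*x^2 + 6*M*x - 4*Q^2) : (3*M-s)/2 < x ∧ x < (3*M+s)/2 := by
  rw [auxFac M Q s x hs2] at hx
  constructor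
  · by_contra h; push_neg at h
    nlinarith [hx]
  · by_contra h; push_neg at h
    nlinarith [hx]

lemma auxP1pos (M Q s r : ℝ) (hs2 : s^2 = 9*M^2 - 8*Q^2)
    (h1 : (3*M-s)/2 < r) (h2 : r < (3*M+s)/2) : 0 < -2*r^2 + 6*M*r - 4*Q^2 := by
  rw [auxFac M Q s r hs2]
  nlinarith [mul_pos (by linarith : (0:ℝ) < r - (3*M-s)/2) (by linarith : (0:ℝ) < (3*M+s)/2 - r)]

lemma auxP1neg (M Q s r : ℝ) (hs2 : s^2 = 9*M^2 - 8*Q^2) (hs0 : 0 < s)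
    (h2 : (3*M+s)/2 < r) : -2*r^2 + 6*M*r - 4*Q^2 < 0 := by
  rw [auxFac M Q s r hs2]
  nlinarith [mul_pos (by linarith : (0:ℝ) < r - (3*M-s)/2) (by linarith : (0:ℝ) < r - (3*M+s)/2)]

lemma auxP2rc (M Q s : ℝ) (hs2 : s^2 = 9*M^2 - 8*Q^2) (hs0 : 0 < s)
    (hM : 0 < M) (hQ2 : 0 < Q^2) :
    6*((3*M+s)/2)^2 - 24*M*((3*M+s)/2) + 20*Q^2 < 0 := by
  nlinarith [hs2, mul_pos hM hs0]

set_option maxHeartbeats 1000000 in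
/-- For all large angular momenta `ℓ`, the potential `V_ℓ` has a local maximum
`r_{ℓ,max} > r₊` with `V_ℓ' ≥ 0` on `[r₊, r_{ℓ,max}]`, and
`r_{ℓ,max} → (3/2)M + √((9/4)M² − 2Q²)` as `ℓ → ∞`. -/
theorem stmt3 (M Q l α : ℝ) (hM : 0 < M) (hQ : 0 < |Q|) (hQM : |Q| < M)
    (hl : 0 < l) (hα : α < 9 / 4)
    (rm rp : ℝ) (hrm : 0 < rm) (hrmrp : rm < rp)
    (hΔm : rm ^ 2 - 2 * M * rm + rm ^ 4 / l ^ 2 + Q ^ 2 = 0)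
    (hΔp : rp ^ 2 - 2 * M * rp + rp ^ 4 / l ^ 2 + Q ^ 2 = 0)
    (hroots : ∀ r : ℝ, 0 < r →
      r ^ 2 - 2 * M * r + r ^ 4 / l ^ 2 + Q ^ 2 = 0 → r = rm ∨ r = rp) :
    ∃ ℓ₀ : ℕ, ∃ rmax : ℕ → ℝ,
      (∀ ℓ : ℕ, ℓ₀ ≤ ℓ →
        rp < rmax ℓ ∧
        IsLocalMax (VRNAdS M Q l α ℓ) (rmax ℓ) ∧
        ∀ r ∈ Set.Icc rp (rmax ℓ), 0 ≤ deriv (VRNAdS M Q l α ℓ) r) ∧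
      Tendsto rmax atTop
        (nhds ((3 / 2) * M + Real.sqrt ((9 / 4) * M ^ 2 - 2 * Q ^ 2))) := by
  have hl0 : l ≠ 0 := ne_of_gt hl
  have hrp : 0 < rp := hrm.trans hrmrp
  have hQ0 : Q ≠ 0 := by simpa [abs_pos] using hQ
  have hQ2 : 0 < Q ^ 2 := by positivity
  have hQM2 : Q ^ 2 < M ^ 2 := by nlinarith [sq_abs Q, abs_nonneg Q]
  have h98 : 0 < 9 * M ^ 2 - 8 * Q ^ 2 := by nlinarith
  set s := Real.sqrt (9 * M ^ 2 - 8 * Q ^ 2) with hsdef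
  have hs2 : s ^ 2 = 9 * M ^ 2 - 8 * Q ^ 2 := Real.sq_sqrt h98.le
  have hs0 : 0 < s := Real.sqrt_pos.mpr h98
  set rc : ℝ := (3 * M + s) / 2 with hrc
  set r1 : ℝ := (3 * M - s) / 2 with hr1
  have hr1c : r1 < rc := by rw [hrc, hr1]; linarith
  have hlim : (3 / 2) * M + Real.sqrt ((9 / 4) * M ^ 2 - 2 * Q ^ 2) = rc := by
    have h1 : (9 / 4) * M ^ 2 - 2 * Q ^ 2 = (s / 2) ^ 2 := by
      rw [div_pow, hs2]; ring
    rw [h1, Real.sqrt_sq (by positivity), hrc]; ring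
  -- cleared-denominator root equations and Vieta relations
  have hΔm' : rm ^ 2 * l ^ 2 - 2 * M * rm * l ^ 2 + rm ^ 4 + Q ^ 2 * l ^ 2 = 0 := by
    field_simp at hΔm; linear_combination hΔm
  have hΔp' : rp ^ 2 * l ^ 2 - 2 * M * rp * l ^ 2 + rp ^ 4 + Q ^ 2 * l ^ 2 = 0 := by
    field_simp at hΔp; linear_combination hΔp
  have hMv : (rm + rp) * (l ^ 2 + rm ^ 2 + rp ^ 2) - 2 * M * l ^ 2 = 0 := by
    have hkey : (rm - rp) * ((rm + rp) * (l ^ 2 + rm ^ 2 + rp ^ 2) - 2 * M * l ^ 2) = 0 := by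
      linear_combination hΔm' - hΔp'
    rcases mul_eq_zero.mp hkey with h | h
    · exact absurd (sub_eq_zero.mp h) (ne_of_lt hrmrp)
    · exact h
  have hK : Q ^ 2 * l ^ 2 = rm * rp * (l ^ 2 + rm ^ 2 + rm * rp + rp ^ 2) := by
    linear_combination hΔm' - rm * hMv
  have hP1p : 0 < -2 * rp ^ 2 + 6 * M * rp - 4 * Q ^ 2 := by
    have := auxP1rp M Q l rm rp hl hrm hrmrp (by linear_combination hΔp') (by linear_combination hK)
    linarith
  obtain ⟨hr1p, hprc⟩ : r1 < rp ∧ rp < rc := by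
    rw [hr1, hrc]
    exact auxBetween M Q s rp hs2 hs0 (by linarith)
  have hP1pos : ∀ r : ℝ, r1 < r → r < rc → 0 < -2 * r ^ 2 + 6 * M * r - 4 * Q ^ 2 := by
    intro r h1 h2
    rw [hr1] at h1; rw [hrc] at h2
    have := auxP1pos M Q s r hs2 h1 h2
    linarith
  have hP1neg : ∀ r : ℝ, rc < r → -2 * r ^ 2 + 6 * M * r - 4 * Q ^ 2 < 0 := by
    intro r h2
    rw [hrc] at h2
    have := auxP1neg M Q s r hs2 hs0 h2
    linarith
  have hP2rc : 6 * rc ^ 2 - 24 * M * rc + 20 * Q ^ 2 < 0 := by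
    rw [hrc]; exact auxP2rc M Q s hs2 hs0 hM hQ2
  -- a small interval [a,b] around rc, inside (rp,∞), where P2 < 0
  obtain ⟨δ, hδ0, hδ⟩ : ∃ δ > 0, ∀ r : ℝ, |r - rc| ≤ δ →
      (6 * r ^ 2 - 24 * M * r + 20 * Q ^ 2 < 0 ∧ rp < r) := by
    have h1 : IsOpen {r : ℝ | 6 * r ^ 2 - 24 * M * r + 20 * Q ^ 2 < 0} :=
      isOpen_lt (by fun_prop) continuous_const
    have h2 : IsOpen {r : ℝ | rp < r} := isOpen_lt continuous_const continuous_id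
    have hU : IsOpen {r : ℝ | 6 * r ^ 2 - 24 * M * r + 20 * Q ^ 2 < 0 ∧ rp < r} :=
      h1.inter h2
    obtain ⟨ε, hε, hball⟩ := Metric.isOpen_iff.mp hU rc ⟨hP2rc, hprc⟩
    exact ⟨ε / 2, half_pos hε, fun r hr =>
      hball (by rw [Metric.mem_ball, Real.dist_eq]; linarith)⟩
  set a : ℝ := rc - δ with ha
  set b : ℝ := rc + δ with hb
  have hab : a < b := by rw [ha, hb]; linarith
  have harc : a < rc := by rw [ha]; linarith
  have hrcb : rc < b := by rw [hb]; linarith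
  have hpa : rp < a := by
    refine (hδ a ?_).2
    rw [ha]
    rw [show rc - δ - rc = -δ by ring, abs_neg, abs_of_pos hδ0]
  have ha0 : 0 < a := hrp.trans hpa
  have hb0 : 0 < b := ha0.trans hab
  have hP2ab : ∀ r ∈ Set.Icc a b, 6 * r ^ 2 - 24 * M * r + 20 * Q ^ 2 < 0 := by
    intro r hr
    rw [ha, hb] at hr
    refine (hδ r ?_).1
    rw [abs_le]
    exact ⟨by linarith [hr.1], by linarith [hr.2]⟩
  -- abbreviations
  have hcontVd0 : ContinuousOn (Vd M Q l α 0) (Set.Icc rp b) := by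
    intro x hx
    exact ((hasDerivAt_Vd M Q l α 0 hl0 (ne_of_gt (lt_of_lt_of_le hrp hx.1))).continuousAt).continuousWithinAt
  obtain ⟨C₁, hC₁⟩ := (isCompact_Icc : IsCompact (Set.Icc rp b)).exists_bound_of_continuousOn hcontVd0
  have hC₁' : ∀ r ∈ Set.Icc rp b, |Vd M Q l α 0 r| ≤ C₁ := by
    intro r hr
    simpa [Real.norm_eq_abs] using hC₁ r hr
  have hcontVdd0 : ContinuousOn (Vdd M Q l α 0) (Set.Icc rp b) := by
    intro x hx
    exact (continuousAt_Vdd M Q l α 0 hl0 (ne_of_gt (lt_of_lt_of_le hrp hx.1))).continuousWithinAt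
  obtain ⟨C₂, hC₂⟩ := (isCompact_Icc : IsCompact (Set.Icc rp b)).exists_bound_of_continuousOn hcontVdd0
  have hC₂' : ∀ r ∈ Set.Icc rp b, |Vdd M Q l α 0 r| ≤ C₂ := by
    intro r hr
    simpa [Real.norm_eq_abs] using hC₂ r hr
  -- the functions G1 = P1/r⁵ and G2 = P2/r⁶
  set G1 : ℝ → ℝ := fun r => (-2 * r ^ 2 + 6 * M * r - 4 * Q ^ 2) / r ^ 5 with hG1
  set G2 : ℝ → ℝ := fun r => (6 * r ^ 2 - 24 * M * r + 20 * Q ^ 2) / r ^ 6 with hG2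
  have hG1pos : ∀ r : ℝ, rp ≤ r → r < rc → 0 < G1 r := by
    intro r h1 h2
    have hr0 : 0 < r := lt_of_lt_of_le hrp h1
    exact div_pos (hP1pos r (lt_of_lt_of_le hr1p h1) h2) (by positivity)
  have hG1neg : ∀ r : ℝ, rc < r → G1 r < 0 := by
    intro r h2
    have hr0 : 0 < r := lt_trans (hrp.trans hprc) h2
    exact div_neg_of_neg_of_pos (hP1neg r h2) (by positivity)
  have hG2neg : ∀ r ∈ Set.Icc a b, G2 r < 0 := by
    intro r hr
    have hr0 : 0 < r := lt_of_lt_of_le ha0 hr.1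
    exact div_neg_of_neg_of_pos (hP2ab r hr) (by positivity)
  have hcontG1 : ContinuousOn G1 (Set.Icc rp a) := by
    rw [hG1]
    apply ContinuousOn.div (by fun_prop) (by fun_prop)
    intro x hx
    exact pow_ne_zero _ (ne_of_gt (lt_of_lt_of_le hrp hx.1))
  have hcontG2 : ContinuousOn (fun r => -G2 r) (Set.Icc a b) := by
    rw [hG2]
    apply ContinuousOn.neg
    apply ContinuousOn.div (by fun_prop) (by fun_prop)
    intro x hx
    exact pow_ne_zero _ (ne_of_gt (lt_of_lt_of_le ha0 hx.1))
  obtain ⟨x₁, hx₁mem, hx₁min⟩ :=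
    (isCompact_Icc : IsCompact (Set.Icc rp a)).exists_isMinOn ⟨rp, le_refl rp, hpa.le⟩ hcontG1
  set m1 : ℝ := G1 x₁ with hm1
  have hm1pos : 0 < m1 := hG1pos x₁ hx₁mem.1 (lt_of_le_of_lt hx₁mem.2 harc)
  have hm1le : ∀ r ∈ Set.Icc rp a, m1 ≤ G1 r := fun r hr => hx₁min hr
  obtain ⟨x₂, hx₂mem, hx₂min⟩ :=
    (isCompact_Icc : IsCompact (Set.Icc a b)).exists_isMinOn ⟨a, le_refl a, hab.le⟩ hcontG2
  set m2 : ℝ := -G2 x₂ with hm2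
  have hm2pos : 0 < m2 := by
    rw [hm2]
    linarith [hG2neg x₂ hx₂mem]
  have hm2le : ∀ r ∈ Set.Icc a b, G2 r ≤ -m2 := by
    intro r hr
    have h := hx₂min hr
    simp only [Set.mem_setOf_eq] at h
    rw [hm2]
    linarith [h]
  have hgb : G1 b < 0 := hG1neg b hrcb
  -- the threshold
  set N : ℝ := max 1 (max (C₁ / m1) (max (C₁ / (-G1 b)) (C₂ / m2))) + 1 with hN
  have hN1 : (1 : ℝ) ≤ N - 1 := by rw [hN]; simp [le_max_left]
  have hNpos : 0 < N := by linarith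
  have hNm1 : C₁ / m1 < N := by
    have := le_max_left (C₁/m1) (max (C₁ / (-G1 b)) (C₂ / m2))
    have h2 := le_max_right 1 (max (C₁/m1) (max (C₁ / (-G1 b)) (C₂ / m2)))
    rw [hN]; linarith
  have hNgb : C₁ / (-G1 b) < N := by
    have h1 := le_max_left (C₁ / (-G1 b)) (C₂ / m2)
    have := le_max_right (C₁/m1) (max (C₁ / (-G1 b)) (C₂ / m2))
    have h2 := le_max_right 1 (max (C₁/m1) (max (C₁ / (-G1 b)) (C₂ / m2)))
    rw [hN]; linarith
  have hNm2 : C₂ / m2 < N := by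
    have h1 := le_max_right (C₁ / (-G1 b)) (C₂ / m2)
    have := le_max_right (C₁/m1) (max (C₁ / (-G1 b)) (C₂ / m2))
    have h2 := le_max_right 1 (max (C₁/m1) (max (C₁ / (-G1 b)) (C₂ / m2)))
    rw [hN]; linarith
  -- for c ≥ N the derivative Vd c is positive on [rp,a], negative at b,
  -- and Vd c is strictly decreasing on [a,b]
  have hVdpos : ∀ c : ℝ, N ≤ c → ∀ r ∈ Set.Icc rp a, 0 < Vd M Q l α c r := by
    intro c hc r hr
    have hr0 : 0 < r := lt_of_lt_of_le hrp hr.1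
    have hcpos : 0 < c := lt_of_lt_of_le hNpos hc
    rw [Vd_split M Q l α c hl0 (ne_of_gt hr0)]
    have h1 := hm1le r hr
    have h2 := hC₁' r ⟨hr.1, le_trans hr.2 (le_of_lt (lt_of_lt_of_le harc hrcb.le))⟩
    have h3 : C₁ < c * m1 := (div_lt_iff₀ hm1pos).mp (lt_of_lt_of_le hNm1 hc)
    have h4 : c * m1 ≤ c * G1 r := mul_le_mul_of_nonneg_left h1 hcpos.le
    have h5 := abs_le.mp h2
    have : c * ((-2 * r ^ 2 + 6 * M * r - 4 * Q ^ 2) / r ^ 5) = c * G1 r := by rw [hG1]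
    rw [this]
    linarith [h5.1]
  have hVdb : ∀ c : ℝ, N ≤ c → Vd M Q l α c b < 0 := by
    intro c hc
    have hcpos : 0 < c := lt_of_lt_of_le hNpos hc
    rw [Vd_split M Q l α c hl0 (ne_of_gt hb0)]
    have h2 := hC₁' b ⟨(hpa.trans hab).le, le_refl b⟩
    have h3 : C₁ < c * (-G1 b) := (div_lt_iff₀ (by linarith [hgb])).mp (lt_of_lt_of_le hNgb hc)
    have h5 := abs_le.mp h2
    have : c * ((-2 * b ^ 2 + 6 * M * b - 4 * Q ^ 2) / b ^ 5) = c * G1 b := by rw [hG1]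
    rw [this]
    linarith [h5.2]
  have hVddneg : ∀ c : ℝ, N ≤ c → ∀ r ∈ Set.Icc a b, Vdd M Q l α c r < 0 := by
    intro c hc r hr
    have hr0 : 0 < r := lt_of_lt_of_le ha0 hr.1
    have hcpos : 0 < c := lt_of_lt_of_le hNpos hc
    rw [Vdd_split M Q l α c hl0 (ne_of_gt hr0)]
    have h1 := hm2le r hr
    have h2 := hC₂' r ⟨(hpa.trans_le hr.1).le, hr.2⟩
    have h3 : C₂ < c * m2 := (div_lt_iff₀ hm2pos).mp (lt_of_lt_of_le hNm2 hc)
    have h4 : c * G2 r ≤ c * (-m2) := mul_le_mul_of_nonneg_left h1 hcpos.le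
    have h5 := abs_le.mp h2
    have : c * ((6 * r ^ 2 - 24 * M * r + 20 * Q ^ 2) / r ^ 6) = c * G2 r := by rw [hG2]
    rw [this]
    linarith [h5.2]
  have hcontVdc : ∀ c : ℝ, ContinuousOn (Vd M Q l α c) (Set.Icc a b) := by
    intro c x hx
    exact ((hasDerivAt_Vd M Q l α c hl0 (ne_of_gt (lt_of_lt_of_le ha0 hx.1))).continuousAt).continuousWithinAt
  have hanti : ∀ c : ℝ, N ≤ c → StrictAntiOn (Vd M Q l α c) (Set.Icc a b) := by
    intro c hc
    apply strictAntiOn_of_deriv_neg (convex_Icc a b) (hcontVdc c)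
    intro x hx
    rw [interior_Icc] at hx
    rw [(hasDerivAt_Vd M Q l α c hl0 (ne_of_gt (lt_of_lt_of_le ha0 hx.1.le))).deriv]
    exact hVddneg c hc x ⟨hx.1.le, hx.2.le⟩
  have hxex : ∀ c : ℝ, N ≤ c → ∃ x, x ∈ Set.Ioo a b ∧ Vd M Q l α c x = 0 := by
    intro c hc
    have h0mem : (0 : ℝ) ∈ Set.Ioo (Vd M Q l α c b) (Vd M Q l α c a) :=
      ⟨hVdb c hc, hVdpos c hc a ⟨hpa.le, le_refl a⟩⟩
    obtain ⟨x, hx1, hx2⟩ := intermediate_value_Ioo' hab.le (hcontVdc c) h0mem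
    exact ⟨x, hx1, hx2⟩
  -- the eventual local-max points
  refine ⟨⌈N⌉₊, fun ℓ : ℕ => if h : N ≤ (ℓ : ℝ) * ((ℓ : ℝ) + 1) then (hxex _ h).choose else rc,
    ?_, ?_⟩
  · intro ℓ hℓ
    have hcℓ : N ≤ (ℓ : ℝ) * ((ℓ : ℝ) + 1) := by
      have h1 : (⌈N⌉₊ : ℝ) ≤ (ℓ : ℝ) := Nat.cast_le.mpr hℓ
      have h2 : N ≤ (⌈N⌉₊ : ℝ) := Nat.le_ceil N
      have hc0 : (0 : ℝ) ≤ (ℓ : ℝ) := Nat.cast_nonneg ℓ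
      have h3 : (ℓ : ℝ) * 1 ≤ (ℓ : ℝ) * ((ℓ : ℝ) + 1) :=
        mul_le_mul_of_nonneg_left (by linarith) hc0
      rw [mul_one] at h3
      linarith
    simp only [dif_pos hcℓ]
    obtain ⟨hxI, hx0⟩ := (hxex _ hcℓ).choose_spec
    set x := (hxex _ hcℓ).choose with hxdef
    have hx0' : 0 < x := ha0.trans hxI.1
    have hcontV : ∀ u v : ℝ, a ≤ u → ContinuousOn (Vexp M Q l α ((ℓ : ℝ) * ((ℓ : ℝ) + 1))) (Set.Icc u v) := by
      intro u v hu y hy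
      exact ((hasDerivAt_Vexp M Q l α _ hl0
        (ne_of_gt (lt_of_lt_of_le ha0 (hu.trans hy.1)))).continuousAt).continuousWithinAt
    have hmono : StrictMonoOn (Vexp M Q l α ((ℓ : ℝ) * ((ℓ : ℝ) + 1))) (Set.Icc a x) := by
      apply strictMonoOn_of_deriv_pos (convex_Icc a x) (hcontV a x (le_refl a))
      intro y hy
      rw [interior_Icc] at hy
      rw [(hasDerivAt_Vexp M Q l α _ hl0 (ne_of_gt (ha0.trans hy.1))).deriv]
      have h1 := hanti _ hcℓ ⟨hy.1.le, le_trans hy.2.le hxI.2.le⟩ ⟨hxI.1.le, hxI.2.le⟩ hy.2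
      rw [hx0] at h1
      exact h1
    have hanti2 : StrictAntiOn (Vexp M Q l α ((ℓ : ℝ) * ((ℓ : ℝ) + 1))) (Set.Icc x b) := by
      apply strictAntiOn_of_deriv_neg (convex_Icc x b) (hcontV x b hxI.1.le)
      intro y hy
      rw [interior_Icc] at hy
      rw [(hasDerivAt_Vexp M Q l α _ hl0 (ne_of_gt (hx0'.trans hy.1))).deriv]
      have h1 := hanti _ hcℓ ⟨hxI.1.le, hxI.2.le⟩ ⟨le_trans hxI.1.le hy.1.le, hy.2.le⟩ hy.1
      rw [hx0] at h1
      exact h1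
    have hlocmax : IsLocalMax (Vexp M Q l α ((ℓ : ℝ) * ((ℓ : ℝ) + 1))) x := by
      filter_upwards [isOpen_Ioo.mem_nhds hxI] with y hy
      rcases lt_trichotomy y x with h | h | h
      · exact (hmono ⟨hy.1.le, h.le⟩ ⟨hxI.1.le, le_refl x⟩ h).le
      · rw [h]
      · exact (hanti2 ⟨le_refl x, hxI.2.le⟩ ⟨h.le, hy.2.le⟩ h).le
    refine ⟨hpa.trans hxI.1, ?_, ?_⟩
    · have heq := VRNAdS_eventuallyEq M Q l α ℓ hl0 (ne_of_gt hx0')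
      have hXeq : VRNAdS M Q l α ℓ x = Vexp M Q l α ((ℓ : ℝ) * ((ℓ : ℝ) + 1)) x :=
        VRNAdS_eq M Q l α ℓ hl0 (ne_of_gt hx0')
      unfold IsLocalMax IsMaxFilter
      filter_upwards [heq, hlocmax] with y h1 h2
      rw [h1, hXeq]
      exact h2
    · intro r hr
      have hr0 : 0 < r := lt_of_lt_of_le hrp hr.1
      rw [deriv_VRNAdS M Q l α ℓ hl0 (ne_of_gt hr0)]
      rcases le_or_gt r a with h | h
      · exact (hVdpos _ hcℓ r ⟨hr.1, h⟩).le
      · rcases eq_or_lt_of_le hr.2 with he | hlt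
        · rw [he, hx0]
        · have h1 := hanti _ hcℓ ⟨h.le, le_trans hr.2 hxI.2.le⟩ ⟨hxI.1.le, hxI.2.le⟩ hlt
          rw [hx0] at h1
          exact h1.le
  · rw [hlim, Metric.tendsto_atTop]
    intro ε hε
    set ε' := min (ε / 2) δ with hε'def
    have hε'0 : 0 < ε' := lt_min (half_pos hε) hδ0
    have hε'δ : ε' ≤ δ := min_le_right _ _
    have hε'ε : ε' ≤ ε / 2 := min_le_left _ _
    set u : ℝ := rc - ε' with hu
    set v : ℝ := rc + ε' with hv
    have huab : u ∈ Set.Icc a b := by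
      rw [hu, ha, hb]; constructor <;> [linarith; linarith]
    have hvab : v ∈ Set.Icc a b := by
      rw [hv, ha, hb]; constructor <;> [linarith; linarith]
    have hrpu : rp ≤ u := le_trans hpa.le huab.1
    have hG1u : 0 < G1 u := hG1pos u hrpu (by rw [hu]; linarith)
    have hG1v : G1 v < 0 := hG1neg v (by rw [hv]; linarith)
    have hu0 : 0 < u := lt_of_lt_of_le hrp hrpu
    have hv0 : 0 < v := lt_of_lt_of_le ha0 hvab.1
    set Nε : ℝ := max N (max (C₁ / G1 u) (C₁ / (-G1 v))) + 1 with hNε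
    have hNεN : N < Nε := by
      have := le_max_left N (max (C₁ / G1 u) (C₁ / (-G1 v)))
      rw [hNε]; linarith
    have hNεu : C₁ / G1 u < Nε := by
      have h1 := le_max_left (C₁ / G1 u) (C₁ / (-G1 v))
      have h2 := le_max_right N (max (C₁ / G1 u) (C₁ / (-G1 v)))
      rw [hNε]; linarith
    have hNεv : C₁ / (-G1 v) < Nε := by
      have h1 := le_max_right (C₁ / G1 u) (C₁ / (-G1 v))
      have h2 := le_max_right N (max (C₁ / G1 u) (C₁ / (-G1 v)))
      rw [hNε]; linarith
    refine ⟨⌈Nε⌉₊, fun n hn => ?_⟩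
    have hcnε : Nε ≤ (n : ℝ) * ((n : ℝ) + 1) := by
      have h1 : (⌈Nε⌉₊ : ℝ) ≤ (n : ℝ) := Nat.cast_le.mpr hn
      have h2 : Nε ≤ (⌈Nε⌉₊ : ℝ) := Nat.le_ceil Nε
      have hc0 : (0 : ℝ) ≤ (n : ℝ) := Nat.cast_nonneg n
      have h3 : (n : ℝ) * 1 ≤ (n : ℝ) * ((n : ℝ) + 1) :=
        mul_le_mul_of_nonneg_left (by linarith) hc0
      rw [mul_one] at h3
      linarith
    have hcn : N ≤ (n : ℝ) * ((n : ℝ) + 1) := le_trans hNεN.le hcnε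
    simp only [dif_pos hcn]
    obtain ⟨hxI, hx0⟩ := (hxex _ hcn).choose_spec
    set x := (hxex _ hcn).choose with hxdef
    have hcpos : 0 < (n : ℝ) * ((n : ℝ) + 1) := lt_of_lt_of_le hNpos hcn
    have hVdu : 0 < Vd M Q l α ((n : ℝ) * ((n : ℝ) + 1)) u := by
      rw [Vd_split M Q l α _ hl0 (ne_of_gt hu0)]
      have h2 := abs_le.mp (hC₁' u ⟨hrpu, huab.2⟩)
      have h3 : C₁ < ((n : ℝ) * ((n : ℝ) + 1)) * G1 u :=
        (div_lt_iff₀ hG1u).mp (lt_of_lt_of_le hNεu hcnε)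
      have he : ((n : ℝ) * ((n : ℝ) + 1)) * ((-2 * u ^ 2 + 6 * M * u - 4 * Q ^ 2) / u ^ 5)
          = ((n : ℝ) * ((n : ℝ) + 1)) * G1 u := by rw [hG1]
      rw [he]
      linarith [h2.1]
    have hVdv : Vd M Q l α ((n : ℝ) * ((n : ℝ) + 1)) v < 0 := by
      rw [Vd_split M Q l α _ hl0 (ne_of_gt hv0)]
      have h2 := abs_le.mp (hC₁' v ⟨le_trans hrpu (by rw [hu, hv]; linarith), hvab.2⟩)
      have h3 : C₁ < ((n : ℝ) * ((n : ℝ) + 1)) * (-G1 v) :=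
        (div_lt_iff₀ (by linarith)).mp (lt_of_lt_of_le hNεv hcnε)
      have he : ((n : ℝ) * ((n : ℝ) + 1)) * ((-2 * v ^ 2 + 6 * M * v - 4 * Q ^ 2) / v ^ 5)
          = ((n : ℝ) * ((n : ℝ) + 1)) * G1 v := by rw [hG1]
      rw [he]
      linarith [h2.2]
    have hux : u < x := by
      by_contra hcon
      push_neg at hcon
      have hle : Vd M Q l α ((n : ℝ) * ((n : ℝ) + 1)) u ≤ Vd M Q l α ((n : ℝ) * ((n : ℝ) + 1)) x := by
        rcases eq_or_lt_of_le hcon with he | hlt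
        · rw [he]
        · exact (hanti _ hcn ⟨hxI.1.le, hxI.2.le⟩ huab hlt).le
      rw [hx0] at hle
      linarith
    have hxv : x < v := by
      by_contra hcon
      push_neg at hcon
      have hle : Vd M Q l α ((n : ℝ) * ((n : ℝ) + 1)) x ≤ Vd M Q l α ((n : ℝ) * ((n : ℝ) + 1)) v := by
        rcases eq_or_lt_of_le hcon with he | hlt
        · rw [he]
        · exact (hanti _ hcn hvab ⟨hxI.1.le, hxI.2.le⟩ hlt).le
      rw [hx0] at hle
      linarith
    rw [Real.dist_eq, abs_lt]
    rw [hu] at hux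
    rw [hv] at hxv
    constructor <;> linarith
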